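/- Let p ∈ ℂ[X] be a nonzero polynomial all of whose coefficients are real (i.e., conj(coeff of p at n) = coeff of p at n for all n), and let ξ > 0. Let Λ be the multiset of roots of p in ℂ counted with multiplicity, and define Q ∈ ℂ[X] by Q = ∏_{r∈Λ}(X − m(r)), where m(r) = (1+ξ)r if |r| = 1 and m(r) = r otherwise. Then every coefficient of Q is real. -/

import Mathlib

/-- If `p ∈ ℂ[X]` is nonzero with real coefficients and `ξ > 0`, then the polynomial
`Q = ∏_{r ∈ roots p} (X - m r)`, where `m r = (1+ξ)r` if `|r| = 1` and `m r = r`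
otherwise, also has real coefficients. -/
theorem pseudo_approximant_real_coeffs (p : Polynomial ℂ) (hp : p ≠ 0)
    (hreal : ∀ n : ℕ, (starRingEnd ℂ) (p.coeff n) = p.coeff n)
    (ξ : ℝ) (hξ : 0 < ξ) (Q : Polynomial ℂ)
    (hQ : Q = (p.roots.map (fun r => Polynomial.X - Polynomial.C
        (if ‖r‖ = 1 then ((1 + ξ : ℝ) : ℂ) * r else r))).prod) :
    ∀ n : ℕ, (starRingEnd ℂ) (Q.coeff n) = Q.coeff n := by
  set φ := starRingEnd ℂ
  set m : ℂ → ℂ := fun r => if ‖r‖ = 1 then ((1 + ξ : ℝ) : ℂ) * r else r with hm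
  have hpmap : p.map φ = p := by
    ext n
    simp [Polynomial.coeff_map, hreal n]
  have hroots : p.roots.map φ = p.roots := by
    rw [← (IsAlgClosed.splits p).roots_map_of_injective φ.injective, hpmap]
  have hcomm : ∀ r : ℂ, φ (m r) = m (φ r) := by
    intro r
    simp only [hm]
    by_cases h : ‖r‖ = 1
    · rw [if_pos h, if_pos (by rwa [Complex.norm_conj]), map_mul, Complex.conj_ofReal]
    · rw [if_neg h, if_neg (by rwa [Complex.norm_conj])]
  have hQmap : Q.map φ = Q := by
    rw [hQ]
    rw [Polynomial.map_multiset_prod]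
    rw [Multiset.map_map]
    conv_rhs => rw [← hroots, Multiset.map_map]
    congr 1
    apply Multiset.map_congr rfl
    intro r _
    have h := hcomm r
    simp only [hm] at h
    push_cast at h ⊢
    simp [Polynomial.map_sub, h]
  intro n
  conv_lhs => rw [← hQmap]
  simp [Polynomial.coeff_map]
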